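/- The k-rhombus (the complete graph K_{k+2} minus one edge) is (n,t)-realizable if and only if k ≤ n-1 and -1/k < t < 1. Moreover in any such realization, if k = n-1 then the inner product of the two nonadjacent vertices equals 2kt²/((k-1)t+1) - 1. -/

import Mathlib

open scoped RealInnerProductSpace
open Finset

variable {E : Type*} [NormedAddCommGroup E] [InnerProductSpace ℝ E]

lemma gram_expand {m : ℕ} {t : ℝ} (w : Fin m → E)
    (hw : ∀ i, ‖w i‖ = 1) (hwt : ∀ i j, i ≠ j → ⟪w i, w j⟫ = t) (g : Fin m → ℝ) :
    ⟪∑ i, g i • w i, ∑ i, g i • w i⟫ = (1 - t) * ∑ i, g i ^ 2 + t * (∑ i, g i) ^ 2 := by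
  rw [sum_inner]
  simp_rw [inner_sum, real_inner_smul_left, real_inner_smul_right]
  have key : ∀ i j : Fin m, g i * (g j * ⟪w i, w j⟫)
      = t * (g i * g j) + (if j = i then (1 - t) * (g i * g j) else 0) := by
    intro i j
    by_cases h : j = i
    · subst h
      have : ⟪w j, w j⟫ = 1 := by
        rw [real_inner_self_eq_norm_sq, hw j]; norm_num
      rw [this]; simp; ring
    · rw [hwt i j (fun hh => h hh.symm)]; simp [h]; ring
  simp_rw [key, Finset.sum_add_distrib, Finset.sum_ite_eq' Finset.univ, Finset.mem_univ,
    if_true]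
  have h1 : ∑ i : Fin m, ∑ j : Fin m, t * (g i * g j) = t * (∑ i, g i) ^ 2 := by
    rw [sq, Finset.sum_mul_sum, Finset.mul_sum]
    exact Finset.sum_congr rfl fun i _ => by rw [Finset.mul_sum]
  have h2 : ∑ i, (1 - t) * (g i * g i) = (1 - t) * ∑ i, g i ^ 2 := by
    rw [Finset.mul_sum]
    exact Finset.sum_congr rfl fun i _ => by rw [sq]
  rw [h1, h2]; ring

lemma indep_of_gram {m : ℕ} {t : ℝ} (ht1 : t < 1) (htm : 0 < 1 + ((m : ℝ) - 1) * t)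
    (w : Fin m → E) (hw : ∀ i, ‖w i‖ = 1) (hwt : ∀ i j, i ≠ j → ⟪w i, w j⟫ = t) :
    LinearIndependent ℝ w := by
  rw [Fintype.linearIndependent_iff]
  intro g hg i
  have h0 : (0 : ℝ) = (1 - t) * ∑ i, g i ^ 2 + t * (∑ i, g i) ^ 2 := by
    rw [← gram_expand w hw hwt g, hg, inner_zero_left]
  have hA : (0 : ℝ) ≤ ∑ i, g i ^ 2 := Finset.sum_nonneg fun _ _ => sq_nonneg _
  have hgi : g i ^ 2 ≤ ∑ i, g i ^ 2 :=
    Finset.single_le_sum (f := fun j => g j ^ 2) (fun _ _ => sq_nonneg _) (Finset.mem_univ i)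
  have hCS : (∑ i, g i) ^ 2 ≤ (m : ℝ) * ∑ i, g i ^ 2 := by
    simpa using sq_sum_le_card_mul_sum_sq (s := Finset.univ) (f := g)
  have hz : g i ^ 2 ≤ 0 := by
    rcases le_or_gt 0 t with h | h
    · nlinarith [sq_nonneg (∑ i, g i)]
    · nlinarith
  have : g i ^ 2 = 0 := le_antisymm hz (sq_nonneg _)
  exact pow_eq_zero_iff (by norm_num) |>.mp this

lemma rhombus_forward (n k : ℕ) (hk : 1 ≤ k) (t : ℝ)
    (f : Fin (k + 2) → EuclideanSpace ℝ (Fin n))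
    (hinj : Function.Injective f) (hnorm : ∀ i, ‖f i‖ = 1)
    (hft : ∀ i j : Fin (k + 2), i ≠ j → ¬(({i, j} : Set (Fin (k + 2))) = {0, 1}) →
      ⟪f i, f j⟫ = t) :
    k < n ∧ -1 / k < t ∧ t < 1 := by
  -- helper: inner product is t whenever vals differ and the larger is ≥ 2
  have hft' : ∀ i j : Fin (k + 2), i.val ≠ j.val → 2 ≤ j.val → ⟪f i, f j⟫ = t := by
    intro i j hij h2
    refine hft i j (fun h => hij (by rw [h])) ?_
    intro h
    have hj : j ∈ ({0, 1} : Set (Fin (k + 2))) := h ▸ (by simp)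
    rcases hj with h0 | h1
    · rw [h0] at h2; simp at h2
    · rw [Set.mem_singleton_iff] at h1
      rw [h1, Fin.val_one] at h2; omega
  have h01 : (0 : Fin (k + 2)) ≠ 1 := by
    simp [Fin.ext_iff]
  -- t < 1
  have ht1 : t < 1 := by
    set u2 : Fin (k + 2) := ⟨2, by omega⟩ with hu2
    have hne : f 0 ≠ f u2 := fun h => by
      have := hinj h
      rw [Fin.ext_iff] at this
      simp [hu2] at this
    have hpos : 0 < ‖f 0 - f u2‖ := by
      rw [norm_pos_iff]; exact sub_ne_zero_of_ne hne
    have hexp : ‖f 0 - f u2‖ ^ 2 = 2 - 2 * t := by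
      rw [norm_sub_sq_real, hnorm, hnorm, hft' 0 u2 (by simp [hu2]) (by simp [hu2])]
      ring
    nlinarith
  -- families through vertex 0 and vertex 1
  have hw : ∀ a : Fin (k + 2), a.val ≤ 1 →
      (∀ i : Fin (k + 1), ‖(if i = 0 then f a else f i.succ)‖ = 1) ∧
      (∀ i j : Fin (k + 1), i ≠ j →
        ⟪(if i = 0 then f a else f i.succ), (if j = 0 then f a else f j.succ)⟫ = t) := by
    intro a ha
    constructor
    · intro i; by_cases h : i = 0 <;> simp [h, hnorm]
    · intro i j hij
      have hsucc : ∀ m : Fin (k + 1), m ≠ 0 → 2 ≤ (m.succ : Fin (k + 2)).val := by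
        intro m hm
        have : 1 ≤ m.val := by
          rcases Nat.eq_zero_or_pos m.val with h | h
          · exact absurd (Fin.ext h) hm
          · exact h
        simp [Fin.val_succ]; omega
      by_cases hi : i = 0
      · have hj : j ≠ 0 := fun h => hij (hi.trans h.symm)
        simp only [hi, if_true, hj, if_false]
        exact hft' a j.succ (by have := hsucc j hj; omega) (hsucc j hj)
      · by_cases hj : j = 0
        · simp only [hi, if_false, hj, if_true]
          rw [real_inner_comm]
          exact hft' a i.succ (by have := hsucc i hi; omega) (hsucc i hi)
        · simp only [hi, hj, if_false]
          refine hft' i.succ j.succ ?_ (hsucc j hj)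
          simp [Fin.val_succ]
          intro h; exact hij (Fin.ext h)
  -- 1 + k t > 0
  have hkt : 0 < 1 + (k : ℝ) * t := by
    have key : ∀ a : Fin (k + 2), a.val ≤ 1 →
        ⟪∑ i : Fin (k + 1), (if i = 0 then f a else f i.succ),
          ∑ i : Fin (k + 1), (if i = 0 then f a else f i.succ)⟫
          = ((k : ℝ) + 1) * (1 + (k : ℝ) * t) := by
      intro a ha
      obtain ⟨hn1, hp1⟩ := hw a ha
      have := gram_expand (fun i : Fin (k + 1) => if i = 0 then f a else f i.succ)
        hn1 hp1 (fun _ => 1)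
      simp only [one_smul] at this
      rw [this]
      simp [Finset.card_univ]
      push_cast; ring
    have hge : 0 ≤ ((k : ℝ) + 1) * (1 + (k : ℝ) * t) := by
      rw [← key 0 (by simp)]
      exact real_inner_self_nonneg
    have hkpos : (0 : ℝ) < (k : ℝ) + 1 := by positivity
    have hge2 : 0 ≤ 1 + (k : ℝ) * t := by nlinarith
    rcases lt_or_eq_of_le hge2 with h | h
    · exact h
    · exfalso
      -- sums are zero, so f 0 = f 1
      have hz : ∀ a : Fin (k + 2), a.val ≤ 1 →
          (∑ i : Fin (k + 1), (if i = 0 then f a else f i.succ)) = 0 := by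
        intro a ha
        rw [← inner_self_eq_zero (𝕜 := ℝ), key a ha, ← h]
        ring
      have e0 := hz 0 (by simp)
      have e1 := hz 1 (by simp [Fin.val_one])
      have hsplit : ∀ a : Fin (k + 2),
          (∑ i : Fin (k + 1), (if i = 0 then f a else f i.succ))
            = f a + ∑ i ∈ Finset.univ.erase (0 : Fin (k + 1)), f i.succ := by
        intro a
        rw [← Finset.add_sum_erase _ _ (Finset.mem_univ 0)]
        simp only [if_true]
        congr 1
        exact Finset.sum_congr rfl fun i hi => by
          rw [if_neg (Finset.ne_of_mem_erase hi)]
      rw [hsplit] at e0 e1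
      have : f 0 = f 1 := by
        have := e0.trans e1.symm
        exact add_right_cancel this
      exact h01 (hinj this)
  refine ⟨?_, ?_, ht1⟩
  · obtain ⟨hn1, hp1⟩ := hw 0 (by simp)
    have hli : LinearIndependent ℝ (fun i : Fin (k + 1) => if i = 0 then f 0 else f i.succ) := by
      apply indep_of_gram ht1 _ _ hn1 hp1
      push_cast; simpa using hkt
    have := hli.fintype_card_le_finrank
    rw [finrank_euclideanSpace_fin, Fintype.card_fin] at this
    omega
  · have hkpos : (0 : ℝ) < (k : ℝ) := by positivity
    rw [div_lt_iff₀ hkpos]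
    linarith


set_option maxHeartbeats 1000000 in
lemma rhombus_construct (n k : ℕ) (hk : 1 ≤ k) (t : ℝ) (hkn : k < n)
    (ht0 : -1 / k < t) (ht1 : t < 1) :
    ∃ f : Fin (k + 2) → EuclideanSpace ℝ (Fin n),
      Function.Injective f ∧ (∀ i, ‖f i‖ = 1) ∧
      (∀ i j : Fin (k + 2), i ≠ j → ¬(({i, j} : Set (Fin (k + 2))) = {0, 1}) →
        ⟪f i, f j⟫ = t) := by
  have hkR : (0 : ℝ) < k := by positivity
  have hkt : 0 < 1 + (k : ℝ) * t := by
    rw [div_lt_iff₀ hkR] at ht0; nlinarith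
  have hk1t : 0 < 1 + ((k : ℝ) - 1) * t := by
    rcases le_or_gt 0 t with h | h
    · nlinarith
    · nlinarith
  set α : ℝ := Real.sqrt (1 - t) with hαdef
  set γ : ℝ := Real.sqrt (1 + ((k : ℝ) - 1) * t) with hγdef
  set β : ℝ := (γ - α) / k with hβdef
  set s : ℝ := Real.sqrt ((1 - t) * (1 + k * t)) / γ with hsdef
  have hα2 : α ^ 2 = 1 - t := Real.sq_sqrt (by linarith)
  have hγ2 : γ ^ 2 = 1 + ((k : ℝ) - 1) * t := Real.sq_sqrt (by linarith)
  have hγpos : 0 < γ := Real.sqrt_pos.mpr hk1t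
  have hγne : γ ≠ 0 := hγpos.ne'
  have hspos : 0 < s :=
    div_pos (Real.sqrt_pos.mpr (mul_pos (by linarith) hkt)) hγpos
  have hs2 : s ^ 2 = (1 - t) * (1 + k * t) / γ ^ 2 := by
    rw [hsdef, div_pow, Real.sq_sqrt (mul_pos (by linarith) hkt).le]
  have hβk : (k : ℝ) * β = γ - α := by
    rw [hβdef]; field_simp
  have h2αβ : 2 * α * β + (k : ℝ) * β ^ 2 = t := by
    have hke : (k:ℝ) * (2 * α * β + (k : ℝ) * β ^ 2) = (k:ℝ) * t := by
      have h1 : (k:ℝ) * (2 * α * β + (k : ℝ) * β ^ 2)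
          = 2 * α * ((k:ℝ) * β) + ((k:ℝ) * β) ^ 2 := by ring
      rw [h1, hβk]
      nlinarith [hα2, hγ2]
    exact mul_left_cancel₀ hkR.ne' hke
  have hαkβ : α + (k : ℝ) * β = γ := by rw [hβk]; ring
  -- basis vectors
  set e0 : EuclideanSpace ℝ (Fin n) := EuclideanSpace.single ⟨0, by omega⟩ 1 with he0def
  set ec : Fin k → EuclideanSpace ℝ (Fin n) :=
    fun m => EuclideanSpace.single ⟨m.val + 1, by have := m.isLt; omega⟩ 1 with hecdef
  have hec : ∀ m m' : Fin k, ⟪ec m, ec m'⟫ = if m = m' then 1 else 0 := by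
    intro m m'
    by_cases h : m = m'
    · subst h
      simp [hecdef, EuclideanSpace.inner_single_left, EuclideanSpace.single_apply]
    · have hne : (⟨m'.val + 1, by have := m'.isLt; omega⟩ : Fin n)
          ≠ ⟨m.val + 1, by have := m.isLt; omega⟩ := by
        simp only [ne_eq, Fin.mk.injEq]
        intro hcon
        exact h (Fin.ext (by omega)).symm
      simp [hecdef, EuclideanSpace.inner_single_left, EuclideanSpace.single_apply, hne, h]
  have h0c : ∀ m : Fin k, ⟪e0, ec m⟫ = 0 := by
    intro m
    have hne : (⟨m.val + 1, by have := m.isLt; omega⟩ : Fin n) ≠ ⟨0, by omega⟩ := by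
      simp [Fin.ext_iff]
    simp [he0def, hecdef, EuclideanSpace.inner_single_left, EuclideanSpace.single_apply, hne]
  have h00 : ⟪e0, e0⟫ = (1 : ℝ) := by
    simp [he0def, EuclideanSpace.inner_single_left, EuclideanSpace.single_apply]
  set U : EuclideanSpace ℝ (Fin n) := ∑ m, ec m with hUdef
  have hcU : ∀ m : Fin k, ⟪ec m, U⟫ = 1 := by
    intro m
    rw [hUdef, inner_sum]
    simp [hec]
  have hUc : ∀ m : Fin k, ⟪U, ec m⟫ = 1 := by
    intro m; rw [real_inner_comm]; exact hcU m
  have hUU : ⟪U, U⟫ = (k : ℝ) := by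
    rw [hUdef, sum_inner]
    have h1 : ∀ m : Fin k, ⟪ec m, U⟫ = 1 := hcU
    simp only [hUdef] at h1
    simp [h1, Finset.card_univ]
  have h0U : ⟪e0, U⟫ = (0 : ℝ) := by
    rw [hUdef, inner_sum]; simp [h0c]
  have hU0 : ⟪U, e0⟫ = (0 : ℝ) := by rw [real_inner_comm]; exact h0U
  -- the vectors
  set v : Fin k → EuclideanSpace ℝ (Fin n) := fun m => α • ec m + β • U with hvdef
  set a : EuclideanSpace ℝ (Fin n) := (t / γ) • U + s • e0 with hadef
  set b : EuclideanSpace ℝ (Fin n) := (t / γ) • U - s • e0 with hbdef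
  have haU : ⟪a, U⟫ = (t / γ) * k := by
    rw [hadef, inner_add_left, real_inner_smul_left, real_inner_smul_left, hUU, h0U]; ring
  have hbU : ⟪b, U⟫ = (t / γ) * k := by
    rw [hbdef, inner_sub_left, real_inner_smul_left, real_inner_smul_left, hUU, h0U]; ring
  have hac : ∀ m, ⟪a, ec m⟫ = t / γ := by
    intro m
    rw [hadef, inner_add_left, real_inner_smul_left, real_inner_smul_left, hUc, h0c]; ring
  have hbc : ∀ m, ⟪b, ec m⟫ = t / γ := by
    intro m
    rw [hbdef, inner_sub_left, real_inner_smul_left, real_inner_smul_left, hUc, h0c]; ring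
  have hvv : ∀ m m' : Fin k, ⟪v m, v m'⟫
      = (if m = m' then α ^ 2 else 0) + (2 * α * β + (k : ℝ) * β ^ 2) := by
    intro m m'
    simp only [hvdef, inner_add_left, inner_add_right, real_inner_smul_left,
      real_inner_smul_right, hec, hcU, hUc, hUU]
    by_cases h : m = m'
    · rw [if_pos h, if_pos h]; ring
    · rw [if_neg h, if_neg h]; ring
  have hvnorm : ∀ m, ⟪v m, v m⟫ = (1 : ℝ) := by
    intro m; rw [hvv m m, if_pos rfl, hα2, h2αβ]; ring
  have hvvne : ∀ m m' : Fin k, m ≠ m' → ⟪v m, v m'⟫ = t := by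
    intro m m' h; rw [hvv m m', if_neg h, h2αβ]; ring
  have hav : ∀ m, ⟪a, v m⟫ = t := by
    intro m
    simp only [hvdef]
    rw [inner_add_right, real_inner_smul_right, real_inner_smul_right, hac, haU]
    have h1 : α * (t / γ) + β * (t / γ * ↑k) = t / γ * (α + ↑k * β) := by ring
    rw [h1, hαkβ, div_mul_cancel₀ t hγne]
  have hbv : ∀ m, ⟪b, v m⟫ = t := by
    intro m
    simp only [hvdef]
    rw [inner_add_right, real_inner_smul_right, real_inner_smul_right, hbc, hbU]
    have h1 : α * (t / γ) + β * (t / γ * ↑k) = t / γ * (α + ↑k * β) := by ring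
    rw [h1, hαkβ, div_mul_cancel₀ t hγne]
  have hγ2ne : γ ^ 2 ≠ 0 := pow_ne_zero 2 hγne
  have hnum : (k : ℝ) * t ^ 2 + (1 - t) * (1 + k * t) = γ ^ 2 := by rw [hγ2]; ring
  have hae : ⟪a, e0⟫ = s := by
    rw [hadef, inner_add_left, real_inner_smul_left, real_inner_smul_left, hU0, h00]; ring
  have hbe : ⟪b, e0⟫ = -s := by
    rw [hbdef, inner_sub_left, real_inner_smul_left, real_inner_smul_left, hU0, h00]; ring
  have haa : ⟪a, a⟫ = (1 : ℝ) := by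
    have h1 : ⟪a, (t / γ) • U + s • e0⟫ = 1 := by
      rw [inner_add_right, real_inner_smul_right, real_inner_smul_right, haU, hae]
      rw [show t / γ * (t / γ * (k:ℝ)) + s * s = (k : ℝ) * t ^ 2 / γ ^ 2 + s ^ 2 by ring,
        hs2, ← add_div, hnum, div_self hγ2ne]
    rwa [← hadef] at h1
  have hbb : ⟪b, b⟫ = (1 : ℝ) := by
    have h1 : ⟪b, (t / γ) • U - s • e0⟫ = 1 := by
      rw [inner_sub_right, real_inner_smul_right, real_inner_smul_right, hbU, hbe]
      rw [show t / γ * (t / γ * (k:ℝ)) - s * -s = (k : ℝ) * t ^ 2 / γ ^ 2 + s ^ 2 by ring,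
        hs2, ← add_div, hnum, div_self hγ2ne]
    rwa [← hbdef] at h1
  -- the map
  set f : Fin (k + 2) → EuclideanSpace ℝ (Fin n) := fun i =>
    if i.val = 0 then a else if i.val = 1 then b
    else v ⟨i.val - 2, by have := i.isLt; omega⟩ with hfdef
  have hf0 : ∀ i : Fin (k + 2), i.val = 0 → f i = a := by
    intro i h; simp only [hfdef]; rw [if_pos h]
  have hf1 : ∀ i : Fin (k + 2), i.val = 1 → f i = b := by
    intro i h; simp only [hfdef]; rw [if_neg (by omega), if_pos h]
  have hf2 : ∀ (i : Fin (k + 2)) (h2 : 2 ≤ i.val),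
      f i = v ⟨i.val - 2, by have := i.isLt; omega⟩ := by
    intro i h2; simp only [hfdef]; rw [if_neg (by omega), if_neg (by omega)]
  have hfself : ∀ i, ⟪f i, f i⟫ = (1 : ℝ) := by
    intro i
    by_cases h0 : i.val = 0
    · rw [hf0 i h0, haa]
    · by_cases h1 : i.val = 1
      · rw [hf1 i h1, hbb]
      · rw [hf2 i (by omega), hvnorm]
  have hnorm : ∀ i, ‖f i‖ = 1 := by
    intro i
    have h := hfself i
    rw [real_inner_self_eq_norm_sq] at h
    nlinarith [norm_nonneg (f i)]
  -- inner products across edges, ordered version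
  have hedge' : ∀ i j : Fin (k + 2), i.val < j.val → 2 ≤ j.val → ⟪f i, f j⟫ = t := by
    intro i j hij h2
    rw [hf2 j h2]
    by_cases h0 : i.val = 0
    · rw [hf0 i h0]; exact hav _
    · by_cases h1 : i.val = 1
      · rw [hf1 i h1]; exact hbv _
      · rw [hf2 i (by omega)]
        apply hvvne
        simp only [ne_eq, Fin.mk.injEq]
        omega
  have hval1 : ((1 : Fin (k + 2)) : ℕ) = 1 := rfl
  have hval0 : ((0 : Fin (k + 2)) : ℕ) = 0 := rfl
  have hedge : ∀ i j : Fin (k + 2), i ≠ j → ¬(({i, j} : Set (Fin (k + 2))) = {0, 1}) →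
      ⟪f i, f j⟫ = t := by
    intro i j hij hset
    rcases lt_trichotomy i.val j.val with h | h | h
    · rcases Nat.lt_or_ge j.val 2 with h2 | h2
      · exfalso
        apply hset
        have hi0 : i = 0 := Fin.ext (by rw [hval0]; omega)
        have hj1 : j = 1 := Fin.ext (by rw [hval1]; omega)
        rw [hi0, hj1]
      · exact hedge' i j h h2
    · exact absurd (Fin.ext h) hij
    · rcases Nat.lt_or_ge i.val 2 with h2 | h2
      · exfalso
        apply hset
        have hi0 : i = 1 := Fin.ext (by rw [hval1]; omega)
        have hj1 : j = 0 := Fin.ext (by rw [hval0]; omega)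
        rw [hi0, hj1, Set.pair_comm]
      · rw [real_inner_comm]; exact hedge' j i h h2
  refine ⟨f, ?_, hnorm, hedge⟩
  -- injectivity
  intro i j hfij
  by_contra hij
  rcases lt_trichotomy i.val j.val with h | h | h
  · rcases Nat.lt_or_ge j.val 2 with h2 | h2
    · rw [hf0 i (by omega), hf1 j (by omega)] at hfij
      have hs' : (s : ℝ) = -s := by
        have h3 : ⟪a, e0⟫ = ⟪b, e0⟫ := by rw [hfij]
        rw [hae, hbe] at h3; exact h3
      linarith
    · have hin := hedge' i j h h2
      rw [hfij, hfself j] at hin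
      linarith
  · exact hij (Fin.ext h)
  · rcases Nat.lt_or_ge i.val 2 with h2 | h2
    · rw [hf1 i (by omega), hf0 j (by omega)] at hfij
      have hs' : (s : ℝ) = -s := by
        have h3 : ⟪a, e0⟫ = ⟪b, e0⟫ := by rw [hfij]
        rw [hae, hbe] at h3; exact h3
      linarith
    · have hin := hedge' j i h h2
      rw [← hfij, hfself i] at hin
      linarith


lemma inner_edge {n k : ℕ} {t : ℝ} (f : Fin (k + 2) → EuclideanSpace ℝ (Fin n))
    (hft : ∀ i j : Fin (k + 2), i ≠ j → ¬(({i, j} : Set (Fin (k + 2))) = {0, 1}) →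
      ⟪f i, f j⟫ = t) :
    ∀ i j : Fin (k + 2), i.val ≠ j.val → 2 ≤ j.val → ⟪f i, f j⟫ = t := by
  intro i j hij h2
  refine hft i j (fun h => hij (by rw [h])) ?_
  intro h
  have hj : j ∈ ({0, 1} : Set (Fin (k + 2))) := h ▸ (by simp)
  rcases hj with h0 | h1
  · rw [h0] at h2; simp at h2
  · rw [Set.mem_singleton_iff] at h1
    rw [h1, Fin.val_one] at h2; omega

set_option maxHeartbeats 1000000 in
lemma rhombus_moreover (n k : ℕ) (hk : 1 ≤ k) (t : ℝ) (hn : k + 1 = n)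
    (f : Fin (k + 2) → EuclideanSpace ℝ (Fin n))
    (hinj : Function.Injective f) (hnorm : ∀ i, ‖f i‖ = 1)
    (hft : ∀ i j : Fin (k + 2), i ≠ j → ¬(({i, j} : Set (Fin (k + 2))) = {0, 1}) →
      ⟪f i, f j⟫ = t) :
    ⟪f 0, f 1⟫ = 2 * k * t ^ 2 / ((k - 1 : ℝ) * t + 1) - 1 := by
  obtain ⟨hkn, ht0, ht1⟩ := rhombus_forward n k hk t f hinj hnorm hft
  have hkR : (0 : ℝ) < k := by positivity
  have hkt : 0 < 1 + (k : ℝ) * t := by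
    rw [div_lt_iff₀ hkR] at ht0; nlinarith
  have hk1t : 0 < 1 + ((k : ℝ) - 1) * t := by
    rcases le_or_gt 0 t with h | h
    · nlinarith
    · nlinarith
  have hft' := inner_edge f hft
  set v : Fin k → EuclideanSpace ℝ (Fin n) :=
    fun m => f ⟨m.val + 2, by have := m.isLt; omega⟩ with hvdef
  have hvnorm : ∀ m, ‖v m‖ = 1 := fun m => hnorm _
  have hvt : ∀ m m' : Fin k, m ≠ m' → ⟪v m, v m'⟫ = t := by
    intro m m' h
    apply hft'
    · simp only [ne_eq, Fin.ext_iff] at h ⊢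
      omega
    · simp
  have hvself : ∀ m, ⟪v m, v m⟫ = (1 : ℝ) := by
    intro m; rw [real_inner_self_eq_norm_sq, hvnorm]; norm_num
  have hf0v : ∀ m, ⟪f 0, v m⟫ = t := by
    intro m
    apply hft' <;> simp [hvdef]
  have hf1v : ∀ m, ⟪f 1, v m⟫ = t := by
    intro m
    apply hft' <;> simp [hvdef, Fin.val_one]
  have hvind : LinearIndependent ℝ v :=
    indep_of_gram ht1 (by push_cast; linarith) v hvnorm hvt
  set d : EuclideanSpace ℝ (Fin n) := f 0 - f 1 with hddef
  have hdne : d ≠ 0 := by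
    rw [hddef, sub_ne_zero]
    intro h
    have := hinj h
    simp [Fin.ext_iff] at this
  have hdd : ⟪d, d⟫ ≠ (0 : ℝ) := fun h => hdne (inner_self_eq_zero.mp h)
  have hvd : ∀ m, ⟪v m, d⟫ = 0 := by
    intro m
    have h0 : ⟪v m, f 0⟫ = t := by rw [real_inner_comm]; exact hf0v m
    have h1 : ⟪v m, f 1⟫ = t := by rw [real_inner_comm]; exact hf1v m
    rw [hddef, inner_sub_right, h0, h1, sub_self]
  set u : Fin (k + 1) → EuclideanSpace ℝ (Fin n) := Fin.cases d v with hudef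
  have hu0 : u 0 = d := rfl
  have hus : ∀ m : Fin k, u m.succ = v m := fun m => rfl
  have hu_li : LinearIndependent ℝ u := by
    rw [Fintype.linearIndependent_iff]
    intro g hg
    rw [Fin.sum_univ_succ] at hg
    have hg0 : g 0 = 0 := by
      have h1 : ⟪g 0 • u 0 + ∑ m : Fin k, g m.succ • u m.succ, d⟫ = (0 : ℝ) := by
        rw [hg, inner_zero_left]
      rw [inner_add_left, real_inner_smul_left, hu0, sum_inner] at h1
      simp only [real_inner_smul_left] at h1
      have h2 : ∀ m : Fin k, g m.succ * ⟪u m.succ, d⟫ = 0 := by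
        intro m; rw [hus, hvd, mul_zero]
      rw [Finset.sum_congr rfl (fun m _ => h2 m)] at h1
      simp at h1
      rcases h1 with h | h
      · exact h
      · exact absurd h hdne
    have hrest : ∀ m : Fin k, g m.succ = 0 := by
      have h1 : ∑ m : Fin k, g m.succ • v m = 0 := by
        rw [hg0, zero_smul, zero_add] at hg
        simpa only [hus] using hg
      exact fun m => (Fintype.linearIndependent_iff.mp hvind) _ h1 m
    intro i
    induction i using Fin.cases with
    | zero => exact hg0
    | succ m => exact hrest m
  have hspan : Submodule.span ℝ (Set.range u) = ⊤ := by
    apply hu_li.span_eq_top_of_card_eq_finrank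
    rw [Fintype.card_fin, finrank_euclideanSpace_fin, hn]
  set c : ℝ := t / (1 + ((k : ℝ) - 1) * t) with hcdef
  have hc : c * (1 + ((k : ℝ) - 1) * t) = t := div_mul_cancel₀ t hk1t.ne'
  set w : EuclideanSpace ℝ (Fin n) := (f 0 + f 1) - ∑ m : Fin k, (2 * c) • v m with hwdef
  have hnorm0 : ⟪f 0, f 0⟫ = (1 : ℝ) := by
    rw [real_inner_self_eq_norm_sq, hnorm]; norm_num
  have hnorm1 : ⟪f 1, f 1⟫ = (1 : ℝ) := by
    rw [real_inner_self_eq_norm_sq, hnorm]; norm_num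
  have hw_d : ⟪w, d⟫ = 0 := by
    rw [hwdef, inner_sub_left, hddef, inner_sub_right, inner_add_left, inner_add_left,
      hnorm0, hnorm1, sum_inner]
    have h2 : ∀ m : Fin k, ⟪(2 * c) • v m, f 0 - f 1⟫ = 0 := by
      intro m
      rw [real_inner_smul_left, ← hddef, hvd, mul_zero]
    rw [Finset.sum_congr rfl (fun m _ => h2 m), Finset.sum_const, smul_zero,
      real_inner_comm (f 1) (f 0)]
    ring
  have hvsum : ∀ m : Fin k, ∑ m' : Fin k, ⟪v m', v m⟫ = 1 + ((k : ℝ) - 1) * t := by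
    intro m
    rw [← Finset.add_sum_erase _ _ (Finset.mem_univ m), hvself]
    have h2 : ∀ m' ∈ Finset.univ.erase m, ⟪v m', v m⟫ = t := by
      intro m' hm'
      exact hvt m' m (Finset.ne_of_mem_erase hm')
    rw [Finset.sum_congr rfl h2, Finset.sum_const, Finset.card_erase_of_mem (Finset.mem_univ m),
      Finset.card_univ, Fintype.card_fin]
    have : ((k - 1 : ℕ) : ℝ) = (k : ℝ) - 1 := by
      push_cast [hk]; ring
    rw [nsmul_eq_mul, this]
  have hw_v : ∀ m, ⟪w, v m⟫ = 0 := by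
    intro m
    rw [hwdef, inner_sub_left, inner_add_left, hf0v, hf1v, sum_inner]
    simp only [real_inner_smul_left]
    rw [← Finset.mul_sum, hvsum m]
    rw [show 2 * c * (1 + ((k:ℝ) - 1) * t) = 2 * (c * (1 + ((k:ℝ) - 1) * t)) by ring, hc]
    ring
  have hw_u : ∀ i, ⟪w, u i⟫ = 0 := by
    intro i
    induction i using Fin.cases with
    | zero => rw [hu0]; exact hw_d
    | succ m => rw [hus]; exact hw_v m
  have hw0 : w = 0 := by
    have hx : ∀ x ∈ Submodule.span ℝ (Set.range u), ⟪w, x⟫ = 0 := by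
      intro x hx
      induction hx using Submodule.span_induction with
      | mem x hx => obtain ⟨i, rfl⟩ := hx; exact hw_u i
      | zero => exact inner_zero_right w
      | add x y _ _ hx hy => rw [inner_add_right, hx, hy, add_zero]
      | smul r x _ hx => rw [real_inner_smul_right, hx, mul_zero]
    have := hx w (by rw [hspan]; exact Submodule.mem_top)
    exact inner_self_eq_zero.mp this
  have hsum : f 0 + f 1 = ∑ m : Fin k, (2 * c) • v m := by
    have := sub_eq_zero.mp hw0
    exact this
  have hmain : ⟪f 0, f 0 + f 1⟫ = 2 * c * (k : ℝ) * t := by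
    rw [hsum, inner_sum]
    simp only [real_inner_smul_right, hf0v]
    rw [Finset.sum_const, Finset.card_univ, Fintype.card_fin, nsmul_eq_mul]
    ring
  rw [inner_add_right, hnorm0] at hmain
  have : ⟪f 0, f 1⟫ = 2 * c * (k : ℝ) * t - 1 := by linarith
  rw [this, hcdef]
  have hne : ((k : ℝ) - 1) * t + 1 ≠ 0 := by nlinarith
  have h4 : 2 * (t / (1 + ((k : ℝ) - 1) * t)) * (k : ℝ) * t
      = 2 * (k : ℝ) * t ^ 2 / (((k : ℝ) - 1) * t + 1) := by
    rw [eq_div_iff hne]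
    linear_combination (2 * (k:ℝ) * t) * div_mul_cancel₀ t hk1t.ne'
  rw [h4]


/-- The `k`-rhombus is `K_{k+2}` minus the edge between the vertices `0` and `1`
(of `Fin (k+2)`); a realization maps vertices injectively to unit vectors with
inner product `t` across every edge. -/
theorem rhombus_realizability (n k : ℕ) (hk : 1 ≤ k) (t : ℝ) :
    ((∃ f : Fin (k + 2) → EuclideanSpace ℝ (Fin n),
        Function.Injective f ∧ (∀ i, ‖f i‖ = 1) ∧
        (∀ i j : Fin (k + 2), i ≠ j → ¬(({i, j} : Set (Fin (k + 2))) = {0, 1}) →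
          ⟪f i, f j⟫ = t)) ↔
      (k < n ∧ -1 / k < t ∧ t < 1)) ∧
    (k + 1 = n →
      ∀ f : Fin (k + 2) → EuclideanSpace ℝ (Fin n),
        Function.Injective f → (∀ i, ‖f i‖ = 1) →
        (∀ i j : Fin (k + 2), i ≠ j → ¬(({i, j} : Set (Fin (k + 2))) = {0, 1}) →
          ⟪f i, f j⟫ = t) →
        ⟪f 0, f 1⟫ = 2 * k * t ^ 2 / ((k - 1 : ℝ) * t + 1) - 1) := by
  constructor
  · constructor
    · rintro ⟨f, hinj, hnorm, hft⟩
      exact rhombus_forward n k hk t f hinj hnorm hft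
    · rintro ⟨hkn, ht0, ht1⟩
      exact rhombus_construct n k hk t hkn ht0 ht1
  · intro hn f hinj hnorm hft
    exact rhombus_moreover n k hk t hn f hinj hnorm hft
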